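/- (Deterministic form of the paper's Theorem 3.1, pointwise convergence of graph transformers to manifold transformers.) Let μ be a Borel probability measure on X, let x_1, …, x_N ∈ X, and let V_1, …, V_N be pairwise disjoint Borel sets whose union is X, with V_j contained in the closed ball of radius r > 0 centered at x_j and μ(V_j) = 1/N for every j. Assume ‖f(x)‖ ≤ 1 for all x ∈ X, let X_1, …, X_N ∈ ℝ^D satisfy ‖X_j − f(x_j)‖ ≤ Δ and ‖X_j‖ ≤ 1 for all j, and let M ≥ 0 satisfy |⟨Q X_i, K X_j⟩| ≤ M for all i, j and |⟨Q f(u), K f(v)⟩| ≤ M for all u, v ∈ X. Then for every index i, ‖Φ_G(i) − Φ_M(x_i)‖ ≤ (C_V + 4·exp(2M)·C_Q·C_K·C_V)·Δ + (exp(M)·C_V + 2·exp(2M)·C_Q·C_K·C_V)·r. -/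

import Mathlib

set_option maxHeartbeats 4000000


open MeasureTheory
open scoped RealInnerProductSpace BigOperators

lemma exp_abs_sub_le' {M α β : ℝ} (hα : α ≤ M) (hβ : β ≤ α) :
    Real.exp α - Real.exp β ≤ Real.exp M * (α - β) := by
  have h1 := Real.add_one_le_exp (β - α)
  have h2 : Real.exp α ≤ Real.exp M := Real.exp_le_exp.2 hα
  have h3 : Real.exp β = Real.exp α * Real.exp (β - α) := by
    rw [← Real.exp_add]; ring_nf
  nlinarith [Real.exp_pos α, Real.exp_pos (β - α), sub_nonneg.2 hβ]

lemma exp_abs_sub_le {M α β : ℝ} (hα : |α| ≤ M) (hβ : |β| ≤ M) :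
    |Real.exp α - Real.exp β| ≤ Real.exp M * |α - β| := by
  rcases le_total β α with h | h
  · rw [abs_of_nonneg (sub_nonneg.2 (Real.exp_le_exp.2 h)), abs_of_nonneg (sub_nonneg.2 h)]
    exact exp_abs_sub_le' (abs_le.1 hα).2 h
  · rw [abs_sub_comm, abs_sub_comm α β,
      abs_of_nonneg (sub_nonneg.2 (Real.exp_le_exp.2 h)), abs_of_nonneg (sub_nonneg.2 h)]
    exact exp_abs_sub_le' (abs_le.1 hβ).2 h

/-- deterministic form of Theorem 3.1: pointwise convergence of graph
transformers to manifold transformers. For a Borel probability measure `μ`, a partition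
`P 1, …, P N` of `X` with `P j ⊆ closedBall (x j) r` and `μ (P j) = 1/N`, normalized
manifold signal `‖f‖ ≤ 1`, positional encodings `Xv j` with `‖Xv j − f (x j)‖ ≤ Δ` and
`‖Xv j‖ ≤ 1`, and `M` bounding all attention inner products,
`‖Φ_G(i) − Φ_M(x i)‖ ≤ (C_V + 4·exp(2M)·C_Q·C_K·C_V)·Δ
                        + (exp(M)·C_V + 2·exp(2M)·C_Q·C_K·C_V)·r`. -/
theorem graph_transformer_to_manifold_transformer_pointwise_bound
    {D : ℕ} {X : Type*} [MetricSpace X] [MeasurableSpace X] [BorelSpace X]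
    (μ : Measure X) [IsProbabilityMeasure μ]
    (Q K V : EuclideanSpace ℝ (Fin D) →ₗ[ℝ] EuclideanSpace ℝ (Fin D))
    (C_Q C_K C_V Δ r : ℝ)
    (hCQ : 0 < C_Q) (hCK : 0 < C_K) (hCV : 0 < C_V) (hΔ : 0 ≤ Δ) (hr : 0 < r)
    (hQ : ∀ u, ‖Q u‖ ≤ C_Q * ‖u‖) (hK : ∀ u, ‖K u‖ ≤ C_K * ‖u‖)
    (hV : ∀ u, ‖V u‖ ≤ C_V * ‖u‖)
    (f : X → EuclideanSpace ℝ (Fin D))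
    (hfLip : ∀ a b, ‖f a - f b‖ ≤ dist a b)
    (hf1 : ∀ a : X, ‖f a‖ ≤ 1)
    (N : ℕ) (x : Fin N → X) (P : Fin N → Set X)
    (hPmeas : ∀ j, MeasurableSet (P j))
    (hPdisj : Pairwise fun j k => Disjoint (P j) (P k))
    (hPcover : (⋃ j, P j) = Set.univ)
    (hPball : ∀ j, P j ⊆ Metric.closedBall (x j) r)
    (hPmass : ∀ j, μ (P j) = (N : ENNReal)⁻¹)
    (Xv : Fin N → EuclideanSpace ℝ (Fin D))
    (hXv : ∀ j, ‖Xv j - f (x j)‖ ≤ Δ) (hXv1 : ∀ j, ‖Xv j‖ ≤ 1)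
    (M : ℝ) (hM0 : 0 ≤ M)
    (hM1 : ∀ i j, abs ⟪Q (Xv i), K (Xv j)⟫ ≤ M)
    (hM2 : ∀ u v : X, abs ⟪Q (f u), K (f v)⟫ ≤ M)
    (i : Fin N) :
    ‖(∑ j, Real.exp ⟪Q (Xv i), K (Xv j)⟫)⁻¹ •
        (∑ j, Real.exp ⟪Q (Xv i), K (Xv j)⟫ • V (Xv j)) -
      (∫ y, Real.exp ⟪Q (f (x i)), K (f y)⟫ ∂μ)⁻¹ •
        (∫ y, Real.exp ⟪Q (f (x i)), K (f y)⟫ • V (f y) ∂μ)‖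
      ≤ (C_V + 4 * Real.exp (2 * M) * C_Q * C_K * C_V) * Δ +
        (Real.exp M * C_V + 2 * Real.exp (2 * M) * C_Q * C_K * C_V) * r := by
  have hN : 0 < N := i.pos
  haveI : Nonempty (Fin N) := ⟨i⟩
  have hN' : (N : ℝ) ≠ 0 := Nat.cast_ne_zero.2 hN.ne'
  have hNpos : (0 : ℝ) < N := Nat.cast_pos.2 hN
  set a : Fin N → ℝ := fun j => Real.exp ⟪Q (Xv i), K (Xv j)⟫ with ha_def
  set g : X → ℝ := fun y => Real.exp ⟪Q (f (x i)), K (f y)⟫ with hg_def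
  set h : X → EuclideanSpace ℝ (Fin D) := fun y => g y • V (f y) with hh_def
  -- continuity of all maps
  have hfC : Continuous f := by
    refine (LipschitzWith.of_dist_le_mul (K := 1) fun p q => ?_).continuous
    rw [dist_eq_norm]
    simpa using hfLip p q
  have hKC : Continuous (K : EuclideanSpace ℝ (Fin D) → EuclideanSpace ℝ (Fin D)) :=
    K.continuous_of_finiteDimensional
  have hVC : Continuous (V : EuclideanSpace ℝ (Fin D) → EuclideanSpace ℝ (Fin D)) :=
    V.continuous_of_finiteDimensional
  have hgC : Continuous g :=
    Real.continuous_exp.comp (Continuous.inner continuous_const (hKC.comp hfC))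
  have hhC : Continuous h := hgC.smul (hVC.comp hfC)
  -- basic bounds
  have hg_ub : ∀ y, g y ≤ Real.exp M := fun y =>
    Real.exp_le_exp.2 (abs_le.1 (hM2 (x i) y)).2
  have hg_lb : ∀ y, Real.exp (-M) ≤ g y := fun y =>
    Real.exp_le_exp.2 (abs_le.1 (hM2 (x i) y)).1
  have ha_ub : ∀ j, a j ≤ Real.exp M := fun j =>
    Real.exp_le_exp.2 (abs_le.1 (hM1 i j)).2
  have ha_lb : ∀ j, Real.exp (-M) ≤ a j := fun j =>
    Real.exp_le_exp.2 (abs_le.1 (hM1 i j)).1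
  have ha_pos : ∀ j, 0 < a j := fun j => Real.exp_pos _
  have hg_pos : ∀ y, 0 < g y := fun y => Real.exp_pos _
  have hVf : ∀ y, ‖V (f y)‖ ≤ C_V := fun y => (hV (f y)).trans (by
    nlinarith [hf1 y, norm_nonneg (f y)])
  -- integrability
  have hg_int : Integrable g μ := by
    refine (integrable_const (Real.exp M)).mono' hgC.aestronglyMeasurable ?_
    filter_upwards with y
    rw [Real.norm_eq_abs, abs_of_pos (hg_pos y)]
    exact hg_ub y
  have hh_int : Integrable h μ := by
    refine (integrable_const (Real.exp M * C_V)).mono' hhC.aestronglyMeasurable ?_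
    filter_upwards with y
    rw [hh_def]
    simp only
    rw [norm_smul, Real.norm_eq_abs, abs_of_pos (hg_pos y)]
    exact mul_le_mul (hg_ub y) (hVf y) (norm_nonneg _) (Real.exp_pos M).le
  -- key quantities
  set ε : ℝ := Real.exp M * (C_Q * C_K * (2 * Δ + r)) with hε_def
  have hε_nonneg : 0 ≤ ε := by positivity
  set S : ℝ := ∑ j, a j with hS_def
  set W : ℝ := ∑ j, a j / N with hW_def
  set I : ℝ := ∫ y, g y ∂μ with hI_def
  set J : EuclideanSpace ℝ (Fin D) := ∫ y, h y ∂μ with hJ_def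
  set U : EuclideanSpace ℝ (Fin D) := ∑ j, (a j / N) • V (Xv j) with hU_def
  have hμP : ∀ j, (μ (P j)).toReal = (N : ℝ)⁻¹ := by
    intro j; rw [hPmass j]; simp
  have hμPfin : ∀ j, μ (P j) < ⊤ := by
    intro j; rw [hPmass j]
    exact ENNReal.inv_lt_top.2 (by exact_mod_cast hN)
  -- partition of the integrals
  have hI_sum : I = ∑ j, ∫ y in P j, g y ∂μ := by
    rw [hI_def, ← setIntegral_univ, ← hPcover]
    exact integral_iUnion_fintype hPmeas hPdisj fun j => hg_int.integrableOn
  have hJ_sum : J = ∑ j, ∫ y in P j, h y ∂μ := by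
    rw [hJ_def, ← setIntegral_univ, ← hPcover]
    exact integral_iUnion_fintype hPmeas hPdisj fun j => hh_int.integrableOn
  -- pointwise estimates on each cell
  have hcell : ∀ j, ∀ y ∈ P j, ‖Xv j - f y‖ ≤ Δ + r := by
    intro j y hy
    calc ‖Xv j - f y‖ = ‖(Xv j - f (x j)) + (f (x j) - f y)‖ := by rw [sub_add_sub_cancel]
      _ ≤ ‖Xv j - f (x j)‖ + ‖f (x j) - f y‖ := norm_add_le _ _
      _ ≤ Δ + r := by
          refine add_le_add (hXv j) ((hfLip (x j) y).trans ?_)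
          rw [dist_comm]
          exact Metric.mem_closedBall.1 (hPball j hy)
  have hinner : ∀ j, ∀ y ∈ P j,
      |⟪Q (Xv i), K (Xv j)⟫ - ⟪Q (f (x i)), K (f y)⟫| ≤ C_Q * C_K * (2 * Δ + r) := by
    intro j y hy
    have hsplit : ⟪Q (Xv i), K (Xv j)⟫ - ⟪Q (f (x i)), K (f y)⟫ =
        ⟪Q (Xv i), K (Xv j) - K (f y)⟫ + ⟪Q (Xv i) - Q (f (x i)), K (f y)⟫ := by
      rw [inner_sub_right, inner_sub_left]; ring
    rw [hsplit]
    have h1 : |⟪Q (Xv i), K (Xv j) - K (f y)⟫| ≤ (C_Q * 1) * (C_K * (Δ + r)) := by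
      refine (abs_real_inner_le_norm _ _).trans (mul_le_mul ?_ ?_ (norm_nonneg _) (by positivity))
      · exact (hQ _).trans (by nlinarith [hXv1 i, norm_nonneg (Xv i)])
      · rw [← map_sub]
        exact (hK _).trans (by nlinarith [hcell j y hy, norm_nonneg (Xv j - f y)])
    have h2 : |⟪Q (Xv i) - Q (f (x i)), K (f y)⟫| ≤ (C_Q * Δ) * (C_K * 1) := by
      refine (abs_real_inner_le_norm _ _).trans (mul_le_mul ?_ ?_ (norm_nonneg _) (by positivity))
      · rw [← map_sub]
        exact (hQ _).trans (by nlinarith [hXv i, norm_nonneg (Xv i - f (x i))])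
      · exact (hK _).trans (by nlinarith [hf1 y, norm_nonneg (f y)])
    calc |⟪Q (Xv i), K (Xv j) - K (f y)⟫ + ⟪Q (Xv i) - Q (f (x i)), K (f y)⟫|
        ≤ |⟪Q (Xv i), K (Xv j) - K (f y)⟫| + |⟪Q (Xv i) - Q (f (x i)), K (f y)⟫| := abs_add_le _ _
      _ ≤ (C_Q * 1) * (C_K * (Δ + r)) + (C_Q * Δ) * (C_K * 1) := add_le_add h1 h2
      _ = C_Q * C_K * (2 * Δ + r) := by ring
  have hag : ∀ j, ∀ y ∈ P j, |a j - g y| ≤ ε := by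
    intro j y hy
    calc |a j - g y| ≤ Real.exp M * |⟪Q (Xv i), K (Xv j)⟫ - ⟪Q (f (x i)), K (f y)⟫| :=
          exp_abs_sub_le (hM1 i j) (hM2 (x i) y)
      _ ≤ Real.exp M * (C_Q * C_K * (2 * Δ + r)) := by
          exact mul_le_mul_of_nonneg_left (hinner j y hy) (Real.exp_pos M).le
  -- cell integral estimates
  have hb : ∀ j, |a j / N - ∫ y in P j, g y ∂μ| ≤ ε / N := by
    intro j
    have hconst : ∫ _ in P j, a j ∂μ = a j / N := by
      rw [setIntegral_const, show μ.real (P j) = (N:ℝ)⁻¹ from hμP j, smul_eq_mul, div_eq_inv_mul]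
    have hdiff : a j / N - ∫ y in P j, g y ∂μ = ∫ y in P j, (a j - g y) ∂μ := by
      rw [integral_sub (integrableOn_const (C := a j) (hμPfin j).ne) hg_int.integrableOn, hconst]
    rw [hdiff, ← Real.norm_eq_abs]
    calc ‖∫ y in P j, (a j - g y) ∂μ‖ ≤ ε * (μ (P j)).toReal := by
          refine norm_setIntegral_le_of_norm_le_const (hμPfin j) (fun y hy => ?_)
          · rw [Real.norm_eq_abs]; exact hag j y hy
      _ = ε / N := by rw [hμP j, div_eq_mul_inv]
  have hc : ∀ j, ‖(a j / N) • V (Xv j) - ∫ y in P j, h y ∂μ‖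
      ≤ (a j * (C_V * (Δ + r)) + ε * C_V) / N := by
    intro j
    have hconst : ∫ _ in P j, a j • V (Xv j) ∂μ = (a j / N) • V (Xv j) := by
      rw [setIntegral_const, show μ.real (P j) = (N:ℝ)⁻¹ from hμP j, smul_smul, div_eq_inv_mul]
    have hdiff : (a j / N) • V (Xv j) - ∫ y in P j, h y ∂μ
        = ∫ y in P j, (a j • V (Xv j) - h y) ∂μ := by
      rw [integral_sub (integrableOn_const (C := a j • V (Xv j)) (hμPfin j).ne) hh_int.integrableOn, hconst]
    rw [hdiff]
    calc ‖∫ y in P j, (a j • V (Xv j) - h y) ∂μ‖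
        ≤ (a j * (C_V * (Δ + r)) + ε * C_V) * (μ (P j)).toReal := by
          refine norm_setIntegral_le_of_norm_le_const (hμPfin j) (fun y hy => ?_)
          · have hsplit : a j • V (Xv j) - h y
                = a j • (V (Xv j) - V (f y)) + (a j - g y) • V (f y) := by
              rw [hh_def]; simp only [smul_sub, sub_smul]; abel
            rw [hsplit]
            have e1 : ‖a j • (V (Xv j) - V (f y))‖ ≤ a j * (C_V * (Δ + r)) := by
              rw [norm_smul, Real.norm_eq_abs, abs_of_pos (ha_pos j), ← map_sub]
              refine mul_le_mul_of_nonneg_left ((hV _).trans ?_) (ha_pos j).le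
              exact mul_le_mul_of_nonneg_left (hcell j y hy) hCV.le
            have e2 : ‖(a j - g y) • V (f y)‖ ≤ ε * C_V := by
              rw [norm_smul, Real.norm_eq_abs]
              exact mul_le_mul (hag j y hy) (hVf y) (norm_nonneg _) hε_nonneg
            exact (norm_add_le _ _).trans (add_le_add e1 e2)
      _ = (a j * (C_V * (Δ + r)) + ε * C_V) / N := by rw [hμP j, div_eq_mul_inv]
  -- global estimates
  have hW_lb : Real.exp (-M) ≤ W := by
    rw [hW_def]
    calc Real.exp (-M) = ∑ _j : Fin N, Real.exp (-M) / N := by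
          rw [Finset.sum_const, Finset.card_univ, Fintype.card_fin, nsmul_eq_mul]
          field_simp
      _ ≤ ∑ j, a j / N := Finset.sum_le_sum fun j _ => by gcongr; exact ha_lb j
  have hexpM1 : 1 ≤ Real.exp M := Real.one_le_exp hM0
  have hW_pos : 0 < W := lt_of_lt_of_le (Real.exp_pos _) hW_lb
  have hI_lb : Real.exp (-M) ≤ I := by
    rw [hI_def]
    calc Real.exp (-M) = ∫ _y, Real.exp (-M) ∂μ := by simp
      _ ≤ ∫ y, g y ∂μ := integral_mono (integrable_const _) hg_int fun y => hg_lb y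
  have hI_pos : 0 < I := lt_of_lt_of_le (Real.exp_pos _) hI_lb
  have hWinv : W⁻¹ ≤ Real.exp M := by
    rw [show Real.exp M = (Real.exp (-M))⁻¹ by rw [← Real.exp_neg, neg_neg]]
    exact inv_anti₀ (Real.exp_pos _) hW_lb
  have hWI : |I - W| ≤ ε := by
    rw [abs_sub_comm, hI_sum, hW_def, ← Finset.sum_sub_distrib]
    refine (Finset.abs_sum_le_sum_abs _ _).trans ?_
    calc ∑ j, |a j / N - ∫ y in P j, g y ∂μ| ≤ ∑ _j : Fin N, ε / N :=
        Finset.sum_le_sum fun j _ => hb j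
      _ = ε := by
          rw [Finset.sum_const, Finset.card_univ, Fintype.card_fin, nsmul_eq_mul]
          field_simp
  have hUJ : ‖U - J‖ ≤ W * (C_V * (Δ + r)) + ε * C_V := by
    rw [hJ_sum, hU_def, ← Finset.sum_sub_distrib]
    refine (norm_sum_le _ _).trans ?_
    calc ∑ j, ‖(a j / N) • V (Xv j) - ∫ y in P j, h y ∂μ‖
        ≤ ∑ j, (a j * (C_V * (Δ + r)) + ε * C_V) / N := Finset.sum_le_sum fun j _ => hc j
      _ = ∑ j, ((a j / N) * (C_V * (Δ + r)) + (ε * C_V) / N) :=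
          Finset.sum_congr rfl fun j _ => by ring
      _ = W * (C_V * (Δ + r)) + ε * C_V := by
          rw [Finset.sum_add_distrib, ← Finset.sum_mul, Finset.sum_const, Finset.card_univ,
            Fintype.card_fin, nsmul_eq_mul, ← hW_def]
          field_simp
  have hJ_norm : ‖J‖ ≤ C_V * I := by
    rw [hJ_def, hI_def]
    calc ‖∫ y, h y ∂μ‖ ≤ ∫ y, ‖h y‖ ∂μ := norm_integral_le_integral_norm _
      _ ≤ ∫ y, C_V * g y ∂μ := by
          refine integral_mono hh_int.norm (hg_int.const_mul C_V) fun y => ?_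
          rw [hh_def]
          simp only
          rw [norm_smul, Real.norm_eq_abs, abs_of_pos (hg_pos y)]
          calc g y * ‖V (f y)‖ ≤ g y * C_V :=
              mul_le_mul_of_nonneg_left (hVf y) (hg_pos y).le
            _ = C_V * g y := mul_comm _ _
      _ = C_V * ∫ y, g y ∂μ := integral_const_mul C_V g
  have hLHS : S⁻¹ • (∑ j, a j • V (Xv j)) = W⁻¹ • U := by
    have h1 : U = (N : ℝ)⁻¹ • ∑ j, a j • V (Xv j) := by
      rw [hU_def, Finset.smul_sum]
      refine Finset.sum_congr rfl fun j _ => ?_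
      rw [smul_smul, div_eq_inv_mul]
    have h2 : W = S / N := by rw [hW_def, hS_def, Finset.sum_div]
    rw [h1, h2, smul_smul]
    congr 1
    have hS_pos : 0 < S := by
      rw [hS_def]
      exact Finset.sum_pos (fun j _ => ha_pos j) Finset.univ_nonempty
    have hS0 : S ≠ 0 := hS_pos.ne'
    field_simp
  rw [show (∑ j, Real.exp ⟪Q (Xv i), K (Xv j)⟫ • V (Xv j)) = ∑ j, a j • V (Xv j) from rfl]
  clear_value a g h ε S W I J U
  have hW0 : W ≠ 0 := hW_pos.ne'
  have hI0 : I ≠ 0 := hI_pos.ne'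
  have hkey : W⁻¹ • U - I⁻¹ • J = W⁻¹ • (U - J) + ((I - W) / (W * I)) • J := by
    have hrw : (I - W) / (W * I) = W⁻¹ - I⁻¹ := by
      field_simp [hW0, hI0]
    rw [hrw]
    module
  have t1 : W⁻¹ * ‖U - J‖ ≤ C_V * (Δ + r) + Real.exp M * (ε * C_V) := by
    calc W⁻¹ * ‖U - J‖ ≤ W⁻¹ * (W * (C_V * (Δ + r)) + ε * C_V) :=
          mul_le_mul_of_nonneg_left hUJ (inv_pos.2 hW_pos).le
      _ = C_V * (Δ + r) + W⁻¹ * (ε * C_V) := by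
          field_simp [hW_pos.ne']
      _ ≤ C_V * (Δ + r) + Real.exp M * (ε * C_V) := by
          refine add_le_add_right (mul_le_mul_of_nonneg_right hWinv (by positivity)) _
  have t2 : |I - W| / (W * I) * ‖J‖ ≤ Real.exp M * (ε * C_V) := by
    calc |I - W| / (W * I) * ‖J‖ ≤ ε / (W * I) * (C_V * I) := by
          refine mul_le_mul (by gcongr) hJ_norm (norm_nonneg _) (by positivity)
      _ = (ε * C_V) / W := by
          field_simp [hW0, hI0]
      _ ≤ Real.exp M * (ε * C_V) := by
          rw [div_eq_mul_inv, mul_comm]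
          exact mul_le_mul_of_nonneg_right hWinv (by positivity)
  have e2 : Real.exp (2 * M) = Real.exp M * Real.exp M := by
    rw [two_mul, Real.exp_add]
  calc ‖S⁻¹ • (∑ j, a j • V (Xv j)) - I⁻¹ • J‖
      = ‖W⁻¹ • (U - J) + ((I - W) / (W * I)) • J‖ := by rw [hLHS, hkey]
    _ ≤ ‖W⁻¹ • (U - J)‖ + ‖((I - W) / (W * I)) • J‖ := norm_add_le _ _
    _ = W⁻¹ * ‖U - J‖ + |I - W| / (W * I) * ‖J‖ := by
        rw [norm_smul, norm_smul, Real.norm_eq_abs, Real.norm_eq_abs,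
          abs_of_pos (inv_pos.2 hW_pos), abs_div, abs_of_pos (mul_pos hW_pos hI_pos)]
    _ ≤ (C_V * (Δ + r) + Real.exp M * (ε * C_V)) + Real.exp M * (ε * C_V) := add_le_add t1 t2
    _ ≤ (C_V + 4 * Real.exp (2 * M) * C_Q * C_K * C_V) * Δ +
        (Real.exp M * C_V + 2 * Real.exp (2 * M) * C_Q * C_K * C_V) * r := by
        rw [hε_def, e2]
        nlinarith [mul_nonneg (mul_nonneg (sub_nonneg.2 hexpM1) hCV.le) hr.le,
          Real.exp_pos M, hCQ.le, hCK.le, hΔ, hr.le]
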